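/- Let p, q ∈ ℝ with p ≠ q satisfy min(p,q) ≤ 0 ≤ max(p,q) ≤ 1. Then the two-variable equal-weight Gini mean G_{p,q}(x,y) := ((x^p + y^p)/(x^q + y^q))^{1/(p-q)} is concave on (0,∞)². -/

import Mathlib

open Set

open Real


lemma phi_deriv (r : ℝ) (hr0 : r ≠ 0) {t : ℝ} (ht : 0 < t) :
    HasDerivAt (fun t : ℝ => (1 + t ^ r) ^ (1/r)) ((1 + t ^ (-r)) ^ (1/r - 1)) t := by
  have hS : 0 < 1 + t ^ r := by positivity
  have h1 : HasDerivAt (fun t : ℝ => 1 + t ^ r) (r * t ^ (r - 1)) t := by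
    simpa using ((Real.hasDerivAt_rpow_const (p := r) (Or.inl ht.ne'))).const_add 1
  have h2 : HasDerivAt (fun u : ℝ => u ^ (1/r)) ((1/r) * (1 + t ^ r) ^ (1/r - 1)) (1 + t ^ r) :=
    Real.hasDerivAt_rpow_const (Or.inl hS.ne')
  have h3 := h2.comp t h1
  refine h3.congr_deriv ?_
  have key : (1 + t ^ (-r)) ^ (1/r - 1) = (1 + t ^ r) ^ (1/r - 1) * t ^ (r - 1) := by
    have : 1 + t ^ (-r) = (1 + t ^ r) * t ^ (-r) := by
      rw [mul_comm, mul_add, mul_one, ← Real.rpow_add ht]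
      ring_nf
      rw [Real.rpow_zero]
      ring
    rw [this, Real.mul_rpow hS.le (Real.rpow_pos_of_pos ht _).le, ← Real.rpow_mul ht.le]
    rw [show -r * (1/r - 1) = r - 1 by field_simp; ring]
  rw [key]; field_simp

lemma phi_concave (r : ℝ) (hr : r ≤ 1) (hr0 : r ≠ 0) :
    ConcaveOn ℝ (Ioi (0:ℝ)) (fun t : ℝ => (1 + t ^ r) ^ (1/r)) := by
  have hdiff : DifferentiableOn ℝ (fun t : ℝ => (1 + t ^ r) ^ (1/r)) (Ioi 0) :=
    fun t ht => (phi_deriv r hr0 ht).differentiableAt.differentiableWithinAt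
  apply AntitoneOn.concaveOn_of_deriv (convex_Ioi 0) hdiff.continuousOn
  · rwa [interior_Ioi]
  · rw [interior_Ioi]
    intro s hs t ht hst
    have hs' : (0:ℝ) < s := hs
    have ht' : (0:ℝ) < t := ht
    rw [(phi_deriv r hr0 hs').deriv, (phi_deriv r hr0 ht').deriv]
    rcases lt_or_gt_of_ne hr0 with hneg | hpos
    · have hbase : 1 + s ^ (-r) ≤ 1 + t ^ (-r) := by
        have := Real.rpow_le_rpow (le_of_lt hs') hst (by linarith : (0:ℝ) ≤ -r)
        linarith
      have hexp : 1/r - 1 ≤ 0 := by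
        have : 1/r < 0 := one_div_neg.2 hneg
        linarith
      exact Real.rpow_le_rpow_of_nonpos (by positivity) hbase hexp
    · have hbase : 1 + t ^ (-r) ≤ 1 + s ^ (-r) := by
        have := Real.rpow_le_rpow_of_nonpos hs' hst (by linarith : -r ≤ 0)
        linarith
      have hexp : 0 ≤ 1/r - 1 := by
        rw [sub_nonneg]
        rw [le_div_iff₀ hpos]; linarith
      exact Real.rpow_le_rpow (by positivity) hbase hexp

lemma perspective_concave {φ : ℝ → ℝ} (hφ : ConcaveOn ℝ (Ioi (0:ℝ)) φ) :
    ConcaveOn ℝ (Ioi (0:ℝ) ×ˢ Ioi (0:ℝ)) (fun z : ℝ × ℝ => z.1 * φ (z.2 / z.1)) := by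
  constructor
  · exact (convex_Ioi 0).prod (convex_Ioi 0)
  · rintro ⟨x₁, y₁⟩ ⟨hx₁, hy₁⟩ ⟨x₂, y₂⟩ ⟨hx₂, hy₂⟩ a b ha hb hab
    simp only [Prod.smul_mk, Prod.mk_add_mk, smul_eq_mul] at *
    have hx₁' : (0:ℝ) < x₁ := hx₁
    have hy₁' : (0:ℝ) < y₁ := hy₁
    have hx₂' : (0:ℝ) < x₂ := hx₂
    have hy₂' : (0:ℝ) < y₂ := hy₂
    have hx₁0 : x₁ ≠ 0 := hx₁'.ne'
    have hx₂0 : x₂ ≠ 0 := hx₂'.ne'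
    set x := a * x₁ + b * x₂ with hxdef
    have hx : 0 < x := by
      rcases ha.lt_or_eq with h | h
      · have h1 := mul_pos h hx₁'
        have h2 := mul_nonneg hb hx₂'.le
        simp only [hxdef]; linarith
      · have hb1 : b = 1 := by linarith
        simp only [hxdef, ← h, hb1]; simpa using hx₂'
    have hx0 : x ≠ 0 := hx.ne'
    have hl1 : (0:ℝ) ≤ a * x₁ / x := by positivity
    have hl2 : (0:ℝ) ≤ b * x₂ / x := by positivity
    have hlsum : a * x₁ / x + b * x₂ / x = 1 := by field_simp; exact hxdef.symm
    have harg : (a * y₁ + b * y₂) / x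
        = (a * x₁ / x) * (y₁ / x₁) + (b * x₂ / x) * (y₂ / x₂) := by
      field_simp
    have hkey := hφ.2 (mem_Ioi.2 (div_pos hy₁' hx₁')) (mem_Ioi.2 (div_pos hy₂' hx₂')) hl1 hl2 hlsum
    simp only [smul_eq_mul] at hkey
    rw [harg]
    calc a * (x₁ * φ (y₁ / x₁)) + b * (x₂ * φ (y₂ / x₂))
        = x * ((a * x₁ / x) * φ (y₁ / x₁) + (b * x₂ / x) * φ (y₂ / x₂)) := by
          field_simp
      _ ≤ x * φ ((a * x₁ / x) * (y₁ / x₁) + (b * x₂ / x) * (y₂ / x₂)) := by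
          exact mul_le_mul_of_nonneg_left hkey hx.le


lemma concaveOn_congr' {E : Type*} [AddCommMonoid E] [Module ℝ E] {s : Set E} {f g : E → ℝ}
    (hf : ConcaveOn ℝ s f) (h : ∀ x ∈ s, f x = g x) : ConcaveOn ℝ s g := by
  refine ⟨hf.1, fun x hx y hy a b ha hb hab => ?_⟩
  rw [← h _ hx, ← h _ hy, ← h _ (hf.1 hx hy ha hb hab)]
  exact hf.2 hx hy ha hb hab

lemma rpow_self_mul_rpow_one_sub {c α : ℝ} (hc : 0 ≤ c) : c ^ α * c ^ (1-α) = c := by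
  rcases hc.eq_or_lt with h | h
  · rcases eq_or_ne α 0 with h0 | h0
    · simp [← h, h0]
    · simp [← h, Real.zero_rpow h0]
  · rw [← Real.rpow_add h]; norm_num

lemma holder2 {α u v u' v' : ℝ} (hα0 : 0 ≤ α) (hα1 : α ≤ 1)
    (hu : 0 ≤ u) (hv : 0 ≤ v) (hu' : 0 ≤ u') (hv' : 0 ≤ v') :
    u^α * v^(1-α) + u'^α * v'^(1-α) ≤ (u+u')^α * (v+v')^(1-α) := by
  rcases hα0.eq_or_lt with h0 | h0
  · simp [← h0]
  rcases hα1.eq_or_lt with h1 | h1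
  · simp [h1]
  rcases (add_nonneg hu hu').eq_or_lt with hU | hU
  · have hu0 : u = 0 := by linarith
    have hu'0 : u' = 0 := by linarith
    simp [hu0, hu'0, Real.zero_rpow h0.ne', le_refl]
  rcases (add_nonneg hv hv').eq_or_lt with hV | hV
  · have hv0 : v = 0 := by linarith
    have hv'0 : v' = 0 := by linarith
    simp [hv0, hv'0, Real.zero_rpow (by linarith : 1 - α ≠ 0), le_refl]
  have hD : 0 < (u+u')^α * (v+v')^(1-α) := by positivity
  rw [← div_le_one hD]
  have h1' : (u/(u+u'))^α * (v/(v+v'))^(1-α) ≤ α*(u/(u+u')) + (1-α)*(v/(v+v')) :=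
    Real.geom_mean_le_arith_mean2_weighted hα0 (by linarith)
      (div_nonneg hu hU.le) (div_nonneg hv hV.le) (by ring)
  have h2' : (u'/(u+u'))^α * (v'/(v+v'))^(1-α) ≤ α*(u'/(u+u')) + (1-α)*(v'/(v+v')) :=
    Real.geom_mean_le_arith_mean2_weighted hα0 (by linarith)
      (div_nonneg hu' hU.le) (div_nonneg hv' hV.le) (by ring)
  rw [Real.div_rpow hu hU.le, Real.div_rpow hv hV.le] at h1'
  rw [Real.div_rpow hu' hU.le, Real.div_rpow hv' hV.le] at h2'
  have hUa : (0:ℝ) < (u+u')^α := Real.rpow_pos_of_pos hU _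
  have hVa : (0:ℝ) < (v+v')^(1-α) := Real.rpow_pos_of_pos hV _
  have key : (u^α*v^(1-α) + u'^α*v'^(1-α))/((u+u')^α*(v+v')^(1-α))
      = u^α/(u+u')^α * (v^(1-α)/(v+v')^(1-α)) + u'^α/(u+u')^α * (v'^(1-α)/(v+v')^(1-α)) := by
    field_simp
  rw [key]
  calc u^α/(u+u')^α * (v^(1-α)/(v+v')^(1-α)) + u'^α/(u+u')^α * (v'^(1-α)/(v+v')^(1-α))
      ≤ (α*(u/(u+u')) + (1-α)*(v/(v+v'))) + (α*(u'/(u+u')) + (1-α)*(v'/(v+v'))) :=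
        add_le_add h1' h2'
    _ = 1 := by field_simp; ring

lemma geom_comb {s : Set (ℝ×ℝ)} {f g : ℝ×ℝ → ℝ}
    (hf : ConcaveOn ℝ s f) (hg : ConcaveOn ℝ s g)
    (hf0 : ∀ x ∈ s, 0 ≤ f x) (hg0 : ∀ x ∈ s, 0 ≤ g x)
    {α : ℝ} (hα0 : 0 ≤ α) (hα1 : α ≤ 1) :
    ConcaveOn ℝ s (fun z => f z ^ α * g z ^ (1-α)) := by
  refine ⟨hf.1, fun z1 hz1 z2 hz2 a b ha hb hab => ?_⟩
  have hzmem := hf.1 hz1 hz2 ha hb hab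
  have hfc := hf.2 hz1 hz2 ha hb hab
  have hgc := hg.2 hz1 hz2 ha hb hab
  simp only [smul_eq_mul] at *
  have haf1 := mul_nonneg ha (hf0 _ hz1)
  have hag1 := mul_nonneg ha (hg0 _ hz1)
  have hbf2 := mul_nonneg hb (hf0 _ hz2)
  have hbg2 := mul_nonneg hb (hg0 _ hz2)
  calc a * (f z1 ^ α * g z1 ^ (1-α)) + b * (f z2 ^ α * g z2 ^ (1-α))
      = (a*f z1)^α * (a*g z1)^(1-α) + (b*f z2)^α * (b*g z2)^(1-α) := by
        rw [Real.mul_rpow ha (hf0 _ hz1), Real.mul_rpow ha (hg0 _ hz1),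
          Real.mul_rpow hb (hf0 _ hz2), Real.mul_rpow hb (hg0 _ hz2)]
        rw [show a^α*(f z1)^α*(a^(1-α)*(g z1)^(1-α)) = (a^α*a^(1-α))*((f z1)^α*(g z1)^(1-α)) by ring,
          show b^α*(f z2)^α*(b^(1-α)*(g z2)^(1-α)) = (b^α*b^(1-α))*((f z2)^α*(g z2)^(1-α)) by ring,
          rpow_self_mul_rpow_one_sub ha, rpow_self_mul_rpow_one_sub hb]
    _ ≤ (a*f z1 + b*f z2)^α * (a*g z1 + b*g z2)^(1-α) :=
        holder2 hα0 hα1 haf1 hag1 hbf2 hbg2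
    _ ≤ f (a•z1+b•z2) ^ α * g (a•z1+b•z2) ^ (1-α) := by
        apply mul_le_mul
        · exact Real.rpow_le_rpow (by linarith [haf1, hbf2]) hfc hα0
        · exact Real.rpow_le_rpow (by linarith [hag1, hbg2]) hgc (by linarith)
        · exact Real.rpow_nonneg (by linarith [hag1, hbg2]) _
        · exact Real.rpow_nonneg (hf0 _ hzmem) _


lemma Nr_concave (r : ℝ) (hr : r ≤ 1) (hr0 : r ≠ 0) :
    ConcaveOn ℝ (Ioi (0:ℝ) ×ˢ Ioi (0:ℝ)) (fun z : ℝ × ℝ => (z.1 ^ r + z.2 ^ r) ^ (1/r)) := by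
  apply concaveOn_congr' (perspective_concave (phi_concave r hr hr0))
  rintro ⟨x, y⟩ ⟨hx, hy⟩
  have hx' : (0:ℝ) < x := hx
  have hy' : (0:ℝ) < y := hy
  have hxr : (0:ℝ) < x ^ r := Real.rpow_pos_of_pos hx' _
  simp only
  rw [Real.div_rpow hy'.le hx'.le]
  rw [show 1 + y^r / x^r = (x^r + y^r)/x^r by field_simp]
  rw [Real.div_rpow (by positivity) hxr.le, ← Real.rpow_mul hx'.le,
    mul_one_div_cancel hr0, Real.rpow_one]
  field_simp

lemma gini_key (p q : ℝ) (hq : q ≤ 0) (hp0 : 0 ≤ p) (hp1 : p ≤ 1) (hne : p ≠ q) :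
    ConcaveOn ℝ (Ioi (0:ℝ) ×ˢ Ioi (0:ℝ))
      (fun z : ℝ × ℝ => ((z.1 ^ p + z.2 ^ p) / (z.1 ^ q + z.2 ^ q)) ^ (1 / (p - q))) := by
  have hqp : q < p := lt_of_le_of_ne (hq.trans hp0) (Ne.symm hne)
  have hpq0 : p - q ≠ 0 := by linarith
  rcases eq_or_lt_of_le hp0 with hp | hp
  · -- p = 0, q < 0
    have hq' : q < 0 := by rw [← hp] at hqp; exact hqp
    apply concaveOn_congr' (((Nr_concave q (by linarith) hq'.ne).smul
      (Real.rpow_nonneg (by norm_num : (0:ℝ) ≤ 2) (-(1/q)))))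
    rintro ⟨x, y⟩ ⟨hx, hy⟩
    have hx' : (0:ℝ) < x := hx
    have hy' : (0:ℝ) < y := hy
    have hSq : (0:ℝ) < x ^ q + y ^ q := by positivity
    simp only [smul_eq_mul, ← hp, Real.rpow_zero]
    rw [show (1:ℝ) + 1 = 2 by norm_num,
      Real.div_rpow (by norm_num) hSq.le, Real.rpow_neg (by norm_num : (0:ℝ) ≤ 2),
      show 1/(0-q) = -(1/q) by rw [zero_sub, div_neg],
      Real.rpow_neg (by norm_num : (0:ℝ) ≤ 2), Real.rpow_neg hSq.le, div_inv_eq_mul]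
  rcases eq_or_lt_of_le hq with hq0 | hq'
  · -- q = 0, 0 < p ≤ 1
    apply concaveOn_congr' (((Nr_concave p hp1 hp.ne').smul
      (Real.rpow_nonneg (by norm_num : (0:ℝ) ≤ 2) (-(1/p)))))
    rintro ⟨x, y⟩ ⟨hx, hy⟩
    have hx' : (0:ℝ) < x := hx
    have hy' : (0:ℝ) < y := hy
    have hSp : (0:ℝ) < x ^ p + y ^ p := by positivity
    simp only [smul_eq_mul, hq0, Real.rpow_zero]
    rw [show (1:ℝ) + 1 = 2 by norm_num, show p - 0 = p by ring,
      Real.div_rpow hSp.le (by norm_num), Real.rpow_neg (by norm_num : (0:ℝ) ≤ 2)]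
    ring
  · -- q < 0 < p ≤ 1
    have hq0 : q ≠ 0 := hq'.ne
    have hα0 : 0 ≤ p/(p-q) := div_nonneg hp.le (by linarith)
    have hα1 : p/(p-q) ≤ 1 := by
      rw [div_le_one (by linarith)]; linarith
    have hNp := Nr_concave p hp1 hp.ne'
    have hNq := Nr_concave q (by linarith) hq'.ne
    have hNp0 : ∀ z ∈ Ioi (0:ℝ) ×ˢ Ioi (0:ℝ),
        0 ≤ (z.1 ^ p + z.2 ^ p) ^ (1/p) := by
      rintro ⟨x, y⟩ ⟨hx, hy⟩
      have hx' : (0:ℝ) < x := hx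
      have hy' : (0:ℝ) < y := hy
      positivity
    have hNq0 : ∀ z ∈ Ioi (0:ℝ) ×ˢ Ioi (0:ℝ),
        0 ≤ (z.1 ^ q + z.2 ^ q) ^ (1/q) := by
      rintro ⟨x, y⟩ ⟨hx, hy⟩
      have hx' : (0:ℝ) < x := hx
      have hy' : (0:ℝ) < y := hy
      positivity
    apply concaveOn_congr' (geom_comb hNp hNq hNp0 hNq0 hα0 hα1)
    rintro ⟨x, y⟩ ⟨hx, hy⟩
    have hx' : (0:ℝ) < x := hx
    have hy' : (0:ℝ) < y := hy
    have hSp : (0:ℝ) < x ^ p + y ^ p := by positivity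
    have hSq : (0:ℝ) < x ^ q + y ^ q := by positivity
    simp only
    rw [← Real.rpow_mul hSp.le, ← Real.rpow_mul hSq.le,
      show 1/p * (p/(p-q)) = 1/(p-q) by field_simp,
      show 1/q * (1 - p/(p-q)) = -(1/(p-q)) by field_simp; ring,
      Real.rpow_neg hSq.le, ← div_eq_mul_inv, ← Real.div_rpow hSp.le hSq.le]

/-- If `min(p,q) ≤ 0 ≤ max(p,q) ≤ 1` with `p ≠ q`, then the two-variable
equal-weight Gini mean `G_{p,q}(x,y) = ((x^p+y^p)/(x^q+y^q))^{1/(p-q)}`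
is concave on `(0,∞)²`. -/
theorem gini_two_var_concave
    (p q : ℝ) (hpq : p ≠ q) (h₁ : min p q ≤ 0) (h₂ : 0 ≤ max p q) (h₃ : max p q ≤ 1) :
    ConcaveOn ℝ (Ioi (0 : ℝ) ×ˢ Ioi (0 : ℝ))
      (fun z : ℝ × ℝ => ((z.1 ^ p + z.2 ^ p) / (z.1 ^ q + z.2 ^ q)) ^ (1 / (p - q))) := by
  rcases le_total q p with h | h
  · rw [min_eq_right h] at h₁
    rw [max_eq_left h] at h₂ h₃
    exact gini_key p q h₁ h₂ h₃ hpq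
  · rw [min_eq_left h] at h₁
    rw [max_eq_right h] at h₂ h₃
    apply concaveOn_congr' (gini_key q p h₁ h₂ h₃ hpq.symm)
    rintro ⟨x, y⟩ ⟨hx, hy⟩
    have hx' : (0:ℝ) < x := hx
    have hy' : (0:ℝ) < y := hy
    have hSp : (0:ℝ) < x ^ p + y ^ p := by positivity
    have hSq : (0:ℝ) < x ^ q + y ^ q := by positivity
    simp only
    rw [show (1:ℝ)/(p-q) = -(1/(q-p)) by rw [show p - q = -(q-p) by ring, div_neg],
      Real.rpow_neg (by positivity), ← Real.inv_rpow (by positivity), inv_div]
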